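/- Let G be a finite graph that is not a clique, S the set of clique separations of G, and for each hole H of G define the orientation O_H := {(A,B) ∈ S⃗ : V(H) ⊆ B}. Then O_H is a well-defined consistent orientation of S, and it avoids every subset F = {(A₁,B₁),...,(Aₙ,Bₙ)} of O_H for which G[B₁ ∩ ... ∩ Bₙ] is a clique. -/

import Mathlib

/-- `(A, B)` is a clique separation of `G`. -/
def IsCliqueSep {V : Type*} (G : SimpleGraph V) (A B : Set V) : Prop :=
  (A ∪ B = Set.univ ∧ ∀ a ∈ A \ B, ∀ b ∈ B \ A, ¬ G.Adj a b) ∧ G.IsClique (A ∩ B)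

open scoped Fin.NatCast Fin.CommRing

/-- A clique separation cannot split a hole: the hole lies on one side. -/
lemma hole_side_aux {V : Type*} (G : SimpleGraph V) {n' : ℕ} (hn : 4 ≤ n' + 2)
    (emb : SimpleGraph.cycleGraph (n' + 2) ↪g G) {A B : Set V}
    (h : IsCliqueSep G A B) : Set.range emb ⊆ A ∨ Set.range emb ⊆ B := by
  classical
  obtain ⟨⟨hun, hsep⟩, hcl⟩ := h
  by_contra hc
  push_neg at hc
  obtain ⟨hA, hB⟩ := hc
  obtain ⟨x, hxr, hxA⟩ := Set.not_subset.mp hA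
  obtain ⟨y, hyr, hyB⟩ := Set.not_subset.mp hB
  obtain ⟨i, rfl⟩ := hxr
  obtain ⟨j, rfl⟩ := hyr
  have memAB : ∀ v : V, v ∈ A ∪ B := fun v => by rw [hun]; trivial
  have hjA : emb j ∈ A := (memAB _).resolve_right hyB
  have hiB : emb i ∈ B := (memAB _).resolve_left hxA
  -- forward search
  have hji : j + (i - j) = i := by ring
  have hQw : emb (j + (((i - j).val : ℕ) : Fin (n' + 2))) ∉ A := by
    rw [Fin.cast_val_eq_self, hji]; exact hxA
  have hQ : ∃ t : ℕ, emb (j + (t : Fin (n' + 2))) ∉ A := ⟨(i - j).val, hQw⟩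
  set k := Nat.find hQ with hkdef
  have hQk : emb (j + (k : Fin (n' + 2))) ∉ A := Nat.find_spec hQ
  have hminQ : ∀ t < k, emb (j + (t : Fin (n' + 2))) ∈ A := fun t ht =>
    not_not.mp (Nat.find_min hQ ht)
  have hkn : k < n' + 2 := lt_of_le_of_lt (Nat.find_le hQw) ((i - j).isLt)
  have hk1 : 1 ≤ k := by
    by_contra h0
    have : k = 0 := by omega
    apply hQk
    rw [this]
    simpa using hjA
  -- backward search
  have hRw : emb (j - (((j - i).val : ℕ) : Fin (n' + 2))) ∉ A := by
    rw [Fin.cast_val_eq_self, sub_sub_cancel j i]; exact hxA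
  have hR : ∃ t : ℕ, emb (j - (t : Fin (n' + 2))) ∉ A := ⟨(j - i).val, hRw⟩
  set m := Nat.find hR with hmdef
  have hRm : emb (j - (m : Fin (n' + 2))) ∉ A := Nat.find_spec hR
  have hminR : ∀ t < m, emb (j - (t : Fin (n' + 2))) ∈ A := fun t ht =>
    not_not.mp (Nat.find_min hR ht)
  have hmn : m < n' + 2 := lt_of_le_of_lt (Nat.find_le hRw) ((j - i).isLt)
  have hm1 : 1 ≤ m := by
    by_contra h0
    have : m = 0 := by omega
    apply hRm
    rw [this]
    simpa using hjA
  -- the two arcs do not overlap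
  have hkm : k + m ≤ n' + 2 := by
    by_contra hcon
    push_neg at hcon
    have ht : n' + 2 - m < k := by omega
    have hcast : (((n' + 2 - m : ℕ)) : Fin (n' + 2)) = -((m : ℕ) : Fin (n' + 2)) := by
      have h0 : (((n' + 2 - m) + m : ℕ) : Fin (n' + 2)) = 0 := by
        rw [show (n' + 2 - m) + m = n' + 2 from by omega]
        exact Fin.natCast_self _
      push_cast at h0
      exact eq_neg_of_add_eq_zero_left h0
    have hmem := hminQ (n' + 2 - m) ht
    rw [hcast, ← sub_eq_add_neg] at hmem
    exact hRm hmem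
  -- the boundary vertices
  set u : Fin (n' + 2) := j + ((k - 1 : ℕ) : Fin (n' + 2)) with hu_def
  set w : Fin (n' + 2) := j - ((m - 1 : ℕ) : Fin (n' + 2)) with hw_def
  have hcastk : ((k : ℕ) : Fin (n' + 2)) = ((k - 1 : ℕ) : Fin (n' + 2)) + 1 := by
    rw [Nat.cast_sub hk1, Nat.cast_one, sub_add_cancel]
  have hcastm : ((m : ℕ) : Fin (n' + 2)) = ((m - 1 : ℕ) : Fin (n' + 2)) + 1 := by
    rw [Nat.cast_sub hm1, Nat.cast_one, sub_add_cancel]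
  have hadjU : (SimpleGraph.cycleGraph (n' + 2)).Adj u (j + (k : Fin (n' + 2))) := by
    rw [SimpleGraph.cycleGraph_adj]
    right
    rw [hu_def, hcastk]; ring
  have hadjW : (SimpleGraph.cycleGraph (n' + 2)).Adj w (j - (m : Fin (n' + 2))) := by
    rw [SimpleGraph.cycleGraph_adj]
    left
    rw [hw_def, hcastm]; ring
  have huA : emb u ∈ A := hminQ (k - 1) (by omega)
  have hwA : emb w ∈ A := hminR (m - 1) (by omega)
  have hkB : emb (j + (k : Fin (n' + 2))) ∈ B \ A := ⟨(memAB _).resolve_left hQk, hQk⟩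
  have hmB : emb (j - (m : Fin (n' + 2))) ∈ B \ A := ⟨(memAB _).resolve_left hRm, hRm⟩
  have huB : emb u ∈ B := by
    by_contra huB
    exact hsep _ ⟨huA, huB⟩ _ hkB (emb.map_adj_iff.mpr hadjU)
  have hwB : emb w ∈ B := by
    by_contra hwB
    exact hsep _ ⟨hwA, hwB⟩ _ hmB (emb.map_adj_iff.mpr hadjW)
  have hk2 : 2 ≤ k := by
    by_contra h0
    have hk : k = 1 := by omega
    have : u = j := by rw [hu_def, hk]; simp
    rw [this] at huB
    exact hyB huB
  have hm2 : 2 ≤ m := by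
    by_contra h0
    have hm : m = 1 := by omega
    have : w = j := by rw [hw_def, hm]; simp
    rw [this] at hwB
    exact hyB hwB
  have hne : u ≠ w := by
    intro he
    rw [hu_def, hw_def, sub_eq_add_neg] at he
    have h0 : ((k - 1 : ℕ) : Fin (n' + 2)) + ((m - 1 : ℕ) : Fin (n' + 2)) = 0 :=
      eq_neg_iff_add_eq_zero.mp (add_left_cancel he)
    rw [← Nat.cast_add, Fin.natCast_eq_zero] at h0
    have := Nat.le_of_dvd (by omega) h0
    omega
  have hGadj : G.Adj (emb u) (emb w) :=
    hcl ⟨huA, huB⟩ ⟨hwA, hwB⟩ (fun h => hne (emb.injective h))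
  have hcadj := emb.map_adj_iff.mp hGadj
  rw [SimpleGraph.cycleGraph_adj] at hcadj
  have huw : u - w = (((k - 1) + (m - 1) : ℕ) : Fin (n' + 2)) := by
    rw [hu_def, hw_def]; push_cast; ring
  rcases hcadj with h1 | h2
  · rw [huw] at h1
    have h0 : (((k - 1) + (m - 1) - 1 : ℕ) : Fin (n' + 2)) = 0 := by
      rw [Nat.cast_sub (by omega), h1, Nat.cast_one, sub_self]
    rw [Fin.natCast_eq_zero] at h0
    have := Nat.le_of_dvd (by omega) h0
    omega
  · have h2' : u - w = -1 := by rw [← neg_sub w u, h2]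
    have h0 : (((k - 1) + (m - 1) + 1 : ℕ) : Fin (n' + 2)) = 0 := by
      rw [Nat.cast_add, Nat.cast_one, ← huw, h2']; ring
    rw [Fin.natCast_eq_zero] at h0
    have := Nat.le_of_dvd (by omega) h0
    omega

/-- Every hole `H` (an induced cycle on more than three vertices) of a finite graph `G`
that is not a clique induces the orientation `O_H = {(A,B) : V(H) ⊆ B}` of the system of
clique separations; this is a well-defined consistent orientation which avoids every
subset whose right-hand sides intersect in a clique. -/
theorem hole_induces_tangle {V : Type*} [Fintype V] (G : SimpleGraph V)
    (hG : ¬ G.IsClique (Set.univ : Set V))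
    (n : ℕ) (hn : 4 ≤ n) (emb : SimpleGraph.cycleGraph n ↪g G)
    (H : Set V) (hH : H = Set.range emb)
    (O : Set (Set V × Set V))
    (hO : O = {p : Set V × Set V | IsCliqueSep G p.1 p.2 ∧ H ⊆ p.2}) :
    -- `O_H` is a well-defined orientation of the clique separations:
    (∀ A B : Set V, IsCliqueSep G A B →
      (((A, B) ∈ O ∨ (B, A) ∈ O) ∧ ¬((A, B) ∈ O ∧ (B, A) ∈ O))) ∧
    -- `O_H` is consistent:
    (∀ A B C D : Set V, (C, D) ∈ O → A ⊆ C → D ⊆ B →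
      ({A, B} : Set (Set V)) ≠ {C, D} →
      (B, A) ∉ O) ∧
    -- `O_H` avoids every subset `F` with `⋂_{(A,B) ∈ F} B` a clique:
    (∀ F ⊆ O, ¬ G.IsClique (⋂ p ∈ F, p.2)) := by
  obtain ⟨n', rfl⟩ : ∃ n', n = n' + 2 := ⟨n - 2, by omega⟩
  -- the hole is contained in no clique
  have hnc : ∀ S : Set V, H ⊆ S → ¬ G.IsClique S := by
    intro S hS hclS
    have h0 : emb ((0 : ℕ) : Fin (n' + 2)) ∈ S := hS (hH ▸ Set.mem_range_self _)
    have h2 : emb ((2 : ℕ) : Fin (n' + 2)) ∈ S := hS (hH ▸ Set.mem_range_self _)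
    have hne : ((0 : ℕ) : Fin (n' + 2)) ≠ ((2 : ℕ) : Fin (n' + 2)) := by
      intro h
      have h0' : ((2 : ℕ) : Fin (n' + 2)) = 0 := by rw [← h]; simp
      rw [Fin.natCast_eq_zero] at h0'
      have := Nat.le_of_dvd (by omega) h0'
      omega
    have hadj := emb.map_adj_iff.mp (hclS h0 h2 (fun h => hne (emb.injective h)))
    rw [SimpleGraph.cycleGraph_adj] at hadj
    rcases hadj with h1 | h1
    · have h3 : ((3 : ℕ) : Fin (n' + 2)) = 0 := by
        push_cast at h1 ⊢
        linear_combination -h1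
      rw [Fin.natCast_eq_zero] at h3
      have := Nat.le_of_dvd (by omega) h3
      omega
    · have h3 : ((1 : ℕ) : Fin (n' + 2)) = 0 := by
        push_cast at h1 ⊢
        linear_combination h1
      rw [Fin.natCast_eq_zero] at h3
      have := Nat.le_of_dvd (by omega) h3
      omega
  -- symmetry of clique separations
  have hsym : ∀ A B : Set V, IsCliqueSep G A B → IsCliqueSep G B A := by
    rintro A B ⟨⟨hun, hsep⟩, hcl⟩
    refine ⟨⟨by rw [Set.union_comm]; exact hun, fun a ha b hb hab => hsep b hb a ha hab.symm⟩,
      by rw [Set.inter_comm]; exact hcl⟩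
  refine ⟨?_, ?_, ?_⟩
  · intro A B hAB
    have hside := hole_side_aux G hn emb hAB
    rw [← hH] at hside
    constructor
    · rcases hside with hsA | hsB
      · exact Or.inr (by rw [hO]; exact ⟨hsym A B hAB, hsA⟩)
      · exact Or.inl (by rw [hO]; exact ⟨hAB, hsB⟩)
    · rintro ⟨h1, h2⟩
      rw [hO] at h1 h2
      exact hnc (A ∩ B) (Set.subset_inter h2.2 h1.2) hAB.2
  · intro A B C D hCD hAC hDB hne hBA
    rw [hO] at hCD hBA
    exact hnc (B ∩ A) (Set.subset_inter (hCD.2.trans hDB) hBA.2) hBA.1.2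
  · intro F hF hclF
    rcases Set.eq_empty_or_nonempty F with rfl | ⟨p, hp⟩
    · apply hG
      simpa using hclF
    · refine hnc _ ?_ hclF
      intro v hv
      apply Set.mem_biInter
      intro q hq
      exact ((hO ▸ hF hq).2) hv
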